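/- Let $k, D > 0$ and $\theta_e, \theta_c \in \mathbb{R}$, define $\mu = \sin\!\left(\frac{\theta_c - \theta_e}{2}\right)$, and suppose $|\mu| < \frac{\pi}{2kD}$. Define $f(\theta) = 2 - 2\cos\!\left(2kD\mu\,\sin\!\left(\frac{\theta_e + \theta_c}{2} - \theta\right)\right)$. Then for $\theta^* = \frac{\theta_c + \theta_e}{2} + \frac{\pi}{2}$ (and likewise for $\theta^* = \frac{\theta_c + \theta_e}{2} - \frac{\pi}{2}$) one has $f(\theta^*) = 2 - 2\cos(2kD\mu)$ and $f(\theta) \le f(\theta^*)$ for all $\theta \in \mathbb{R}$. -/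
import Mathlib


open Real

theorem orientation_maximizer_small_mu
    (k D θe θc : ℝ) (hk : 0 < k) (hD : 0 < D)
    (μ : ℝ) (hμdef : μ = Real.sin ((θc - θe) / 2))
    (hμ : |μ| < Real.pi / (2 * k * D))
    (f : ℝ → ℝ)
    (hf : ∀ θ, f θ = 2 - 2 * Real.cos (2 * k * D * μ * Real.sin ((θe + θc) / 2 - θ)))
    (θstar : ℝ)
    (hθstar : θstar = (θc + θe) / 2 + Real.pi / 2 ∨
              θstar = (θc + θe) / 2 - Real.pi / 2) :
    f θstar = 2 - 2 * Real.cos (2 * k * D * μ) ∧ ∀ θ : ℝ, f θ ≤ f θstar := by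
  have hkD : 0 < 2 * k * D := by positivity
  have habs : |2 * k * D * μ| < Real.pi := by
    have : |2 * k * D * μ| = 2 * k * D * |μ| := by
      rw [abs_mul, abs_of_pos hkD]
    rw [this]
    calc 2 * k * D * |μ| < 2 * k * D * (Real.pi / (2 * k * D)) := by
          exact mul_lt_mul_of_pos_left hμ hkD
      _ = Real.pi := by field_simp
  have hstar : f θstar = 2 - 2 * Real.cos (2 * k * D * μ) := by
    rcases hθstar with h | h <;> rw [hf, h]
    · have : (θe + θc) / 2 - ((θc + θe) / 2 + Real.pi / 2) = -(Real.pi / 2) := by ring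
      rw [this, Real.sin_neg, Real.sin_pi_div_two]
      rw [show 2 * k * D * μ * -1 = -(2 * k * D * μ) by ring, Real.cos_neg]
    · have : (θe + θc) / 2 - ((θc + θe) / 2 - Real.pi / 2) = Real.pi / 2 := by ring
      rw [this, Real.sin_pi_div_two, mul_one]
  refine ⟨hstar, fun θ => ?_⟩
  rw [hf, hstar]
  have key : Real.cos (2 * k * D * μ) ≤
      Real.cos (2 * k * D * μ * Real.sin ((θe + θc) / 2 - θ)) := by
    rw [← Real.cos_abs (2 * k * D * μ), ← Real.cos_abs (2 * k * D * μ * _)]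
    apply Real.cos_le_cos_of_nonneg_of_le_pi (abs_nonneg _) (le_of_lt habs)
    calc |2 * k * D * μ * Real.sin ((θe + θc) / 2 - θ)|
        = |2 * k * D * μ| * |Real.sin ((θe + θc) / 2 - θ)| := abs_mul _ _
      _ ≤ |2 * k * D * μ| * 1 := by
          exact mul_le_mul_of_nonneg_left (Real.abs_sin_le_one _) (abs_nonneg _)
      _ = |2 * k * D * μ| := mul_one _
  linarith
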